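/- Let {θ̂ₙ : n even} be any collection of homogeneous Δ-cables with θ̂ₙ = (θₙ⁽ʲ⁾) rooted at θₙ⁽⁰⁾ = Σ_{i=0}^{n}(-1)ⁱxᵢx_{n-i}. Then for each j ≥ 0 the set {θ_{2i}^{(j-2i)} : 0 ≤ i ≤ j/2} is a k-basis of the space Ω_{(2,j)} of quadratic forms of weight j, and consequently the vertices of all the cables θ̂ₙ form a k-basis of the space Ω₂ of all quadratic forms in Ω. -/
import Mathlib


open MvPolynomial

/-- The down operator `Δ` on `Ω = k[x₀, x₁, x₂, ...]`. -/
noncomputable def downOp (k : Type*) [Field k] [CharZero k] :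
    Derivation k (MvPolynomial ℕ k) (MvPolynomial ℕ k) :=
  MvPolynomial.mkDerivation k (fun n => if n = 0 then 0 else X (n - 1))

/-- `θₙ⁽⁰⁾ = Σ_{i=0}^{n} (-1)ⁱ xᵢ x_{n-i}`. -/
noncomputable def theta0 (k : Type*) [Field k] [CharZero k] (n : ℕ) : MvPolynomial ℕ k :=
  ∑ i ∈ Finset.range (n + 1), (-1 : MvPolynomial ℕ k) ^ i * X i * X (n - i)

/-- `Ω_{(2,m)}`, the span of the monomials `xᵢ x_{m-i}` for `0 ≤ i ≤ m`. -/
noncomputable def quadSpace (k : Type*) [Field k] [CharZero k] (m : ℕ) :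
    Submodule k (MvPolynomial ℕ k) :=
  Submodule.span k {p | ∃ i ≤ m, p = X i * X (m - i)}

/-- `Ω₂`, the span of all quadratic monomials `xᵢ xₘ`. -/
noncomputable def quadTotal (k : Type*) [Field k] [CharZero k] :
    Submodule k (MvPolynomial ℕ k) :=
  Submodule.span k {p | ∃ i m : ℕ, p = X i * X m}

section Aux
open MvPolynomial
set_option linter.unusedSectionVars false
set_option linter.unusedVariables false

variable {k : Type*} [Field k] [CharZero k]

lemma downOp_X (m : ℕ) : downOp k (X m) = if m = 0 then 0 else X (m - 1) :=
  mkDerivation_X _ _ _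

lemma downOp_XX (i m : ℕ) : downOp k (X i * X m) =
    X i * (if m = 0 then 0 else X (m - 1)) + X m * (if i = 0 then 0 else X (i - 1)) := by
  rw [Derivation.leibniz, downOp_X, downOp_X, smul_eq_mul, smul_eq_mul]

lemma theta0_eq (n : ℕ) :
    theta0 k n = ∑ i ∈ Finset.range (n + 1), ((-1 : k) ^ i) • (X i * X (n - i)) := by
  simp [theta0, MvPolynomial.smul_eq_C_mul, mul_assoc]

lemma downOp_theta0 (n : ℕ) : downOp k (theta0 k n) = 0 := by
  rw [theta0_eq, map_sum]
  have h1 : ∀ i ∈ Finset.range (n + 1),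
      downOp k (((-1 : k) ^ i) • (X i * X (n - i))) =
      ((-1 : k) ^ i) • (X i * (if n - i = 0 then 0 else X (n - i - 1))
        + X (n - i) * (if i = 0 then 0 else X (i - 1))) := by
    intro i _
    rw [Derivation.map_smul, downOp_XX]
  rw [Finset.sum_congr rfl h1]
  have h2 : ∀ i ∈ Finset.range (n + 1),
      ((-1 : k) ^ i) • ((X i : MvPolynomial ℕ k) * (if n - i = 0 then 0 else X (n - i - 1))
        + X (n - i) * (if i = 0 then 0 else X (i - 1))) =
      ((-1 : k) ^ i) • ((X i : MvPolynomial ℕ k) * (if n - i = 0 then 0 else X (n - i - 1)))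
        + ((-1 : k) ^ i) • ((X (n - i) : MvPolynomial ℕ k) * (if i = 0 then 0 else X (i - 1))) :=
    fun i _ => smul_add _ _ _
  rw [Finset.sum_congr rfl h2, Finset.sum_add_distrib]
  have e1 : ∑ i ∈ Finset.range (n + 1),
      ((-1 : k) ^ i) • ((X i : MvPolynomial ℕ k) * (if n - i = 0 then 0 else X (n - i - 1)))
      = ∑ i ∈ Finset.range n, ((-1 : k) ^ i) • ((X i : MvPolynomial ℕ k) * X (n - 1 - i)) := by
    rw [Finset.sum_range_succ]
    simp only [Nat.sub_self, reduceIte, mul_zero, smul_zero, add_zero]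
    refine Finset.sum_congr rfl fun i hi => ?_
    rw [Finset.mem_range] at hi
    rw [if_neg (show ¬ (n - i = 0) by omega), show n - i - 1 = n - 1 - i by omega]
  have e2 : ∑ i ∈ Finset.range (n + 1),
      ((-1 : k) ^ i) • ((X (n - i) : MvPolynomial ℕ k) * (if i = 0 then 0 else X (i - 1)))
      = ∑ i ∈ Finset.range n, (-((-1 : k) ^ i)) • ((X i : MvPolynomial ℕ k) * X (n - 1 - i)) := by
    rw [Finset.sum_range_succ']
    simp only [reduceIte, mul_zero, smul_zero, add_zero]
    refine Finset.sum_congr rfl fun i hi => ?_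
    rw [Finset.mem_range] at hi
    rw [if_neg (show ¬ (i + 1 = 0) by omega), pow_succ]
    have : n - (i + 1) = n - 1 - i := by omega
    rw [this]
    have : (i + 1 - 1) = i := by omega
    rw [this, mul_comm (X (n-1-i) : MvPolynomial ℕ k) (X i), mul_neg_one, neg_smul]
  rw [e1, e2, ← Finset.sum_add_distrib]
  refine Finset.sum_eq_zero fun i _ => ?_
  rw [neg_smul, add_neg_cancel]

lemma theta0_ne_zero {n : ℕ} (hn : Even n) : theta0 k n ≠ 0 := by
  intro h
  have := congrArg (eval (fun _ => (1 : k))) h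
  simp only [theta0, map_sum, map_mul, map_pow, map_neg, map_one, eval_X, mul_one, map_zero] at this
  rw [neg_one_geom_sum] at this
  rw [if_neg (by simpa using hn.add_one)] at this
  exact one_ne_zero this

lemma XX_eq_monomial (i m : ℕ) : (X i * X m : MvPolynomial ℕ k)
    = monomial (Finsupp.single i 1 + Finsupp.single m 1) 1 := by
  rw [X, X, monomial_mul, one_mul]

lemma single_key {j a b : ℕ} (ha : a ≤ j / 2) (hab : a < b)
    (h : (Finsupp.single a 1 + Finsupp.single (j - a) 1 : ℕ →₀ ℕ)
      = Finsupp.single b 1 + Finsupp.single (j - b) 1) (hb : b ≤ j / 2) : False := by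
  have h2 := DFunLike.congr_fun h a
  simp only [Finsupp.add_apply, Finsupp.single_apply] at h2
  split_ifs at h2 <;> omega

lemma mono_li (j : ℕ) : LinearIndependent k
    (fun i : Fin (j / 2 + 1) => (X (i : ℕ) * X (j - (i : ℕ)) : MvPolynomial ℕ k)) := by
  have h := (MvPolynomial.basisMonomials ℕ k).linearIndependent.comp
    (fun i : Fin (j / 2 + 1) => Finsupp.single (i : ℕ) 1 + Finsupp.single (j - (i : ℕ)) 1)
    (by
      intro a b hab
      by_contra hne
      have ha : (a : ℕ) ≤ j / 2 := Nat.lt_succ_iff.mp a.isLt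
      have hb : (b : ℕ) ≤ j / 2 := Nat.lt_succ_iff.mp b.isLt
      rcases lt_trichotomy (a : ℕ) (b : ℕ) with h | h | h
      · exact single_key ha h hab hb
      · exact hne (Fin.ext h)
      · exact single_key hb h hab.symm ha)
  have he : (fun i : Fin (j / 2 + 1) => (X (i : ℕ) * X (j - (i : ℕ)) : MvPolynomial ℕ k))
      = ((MvPolynomial.basisMonomials ℕ k) ∘
        fun i : Fin (j / 2 + 1) => Finsupp.single (i : ℕ) 1 + Finsupp.single (j - (i : ℕ)) 1) := by
    funext i
    simp [coe_basisMonomials, XX_eq_monomial]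
  rw [he]
  exact h

lemma span_mono (j : ℕ) : Submodule.span k
    (Set.range fun i : Fin (j / 2 + 1) => (X (i : ℕ) * X (j - (i : ℕ)) : MvPolynomial ℕ k))
    = quadSpace k j := by
  apply le_antisymm
  · rw [Submodule.span_le]
    rintro _ ⟨i, rfl⟩
    exact Submodule.subset_span ⟨(i : ℕ), by omega, rfl⟩
  · rw [quadSpace, Submodule.span_le]
    rintro _ ⟨i, hi, rfl⟩
    apply Submodule.subset_span
    by_cases h : i ≤ j / 2
    · exact ⟨⟨i, by omega⟩, rfl⟩
    · refine ⟨⟨j - i, by omega⟩, ?_⟩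
      show (X (j - i) * X (j - (j - i)) : MvPolynomial ℕ k) = X i * X (j - i)
      rw [show j - (j - i) = i by omega, mul_comm]

lemma finrank_quadSpace (j : ℕ) : Module.finrank k (quadSpace k j) = j / 2 + 1 := by
  rw [← span_mono, finrank_span_eq_card (mono_li (k := k) j)]
  simp

lemma quadSpace_le_whs (m : ℕ) :
    quadSpace k m ≤ weightedHomogeneousSubmodule k (id : ℕ → ℕ) m := by
  rw [quadSpace, Submodule.span_le]
  rintro _ ⟨i, hi, rfl⟩
  simp only [SetLike.mem_coe, mem_weightedHomogeneousSubmodule]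
  have := (isWeightedHomogeneous_X k (id : ℕ → ℕ) i).mul
    (isWeightedHomogeneous_X k (id : ℕ → ℕ) (m - i))
  simpa [show i + (m - i) = m by omega] using this

lemma proj_quad {m j : ℕ} {p : MvPolynomial ℕ k} (hp : p ∈ quadSpace k m) :
    weightedHomogeneousComponent (id : ℕ → ℕ) j p = if j = m then p else 0 := by
  have hw : p.IsWeightedHomogeneous (id : ℕ → ℕ) m := quadSpace_le_whs m hp
  by_cases h : j = m
  · subst h
    rw [if_pos rfl, hw.weightedHomogeneousComponent_same]
  · rw [if_neg h, hw.weightedHomogeneousComponent_ne j h]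

lemma li_range {M : Type*} [AddCommGroup M] [Module k M] {n : ℕ} {v : ℕ → M}
    (hli : LinearIndependent k (fun i : Fin n => v (i : ℕ)))
    {cb : ℕ → k} (h : ∑ i ∈ Finset.range n, cb i • v i = 0) : ∀ i < n, cb i = 0 := by
  intro i hi
  have := Fintype.linearIndependent_iff.mp hli (fun i => cb i) ?_ ⟨i, hi⟩
  · exact this
  · rw [Fin.sum_univ_eq_sum_range (fun i => cb i • v i) n]
    exact h

lemma li_of_range {M : Type*} [AddCommGroup M] [Module k M] {n : ℕ} {v : ℕ → M}
    (h : ∀ cb : ℕ → k, ∑ i ∈ Finset.range n, cb i • v i = 0 → ∀ i < n, cb i = 0) :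
    LinearIndependent k (fun i : Fin n => v (i : ℕ)) := by
  rw [Fintype.linearIndependent_iff]
  intro c hc
  classical
  set cb : ℕ → k := fun i => if hi : i < n then c ⟨i, hi⟩ else 0 with hcb
  have h0 : ∑ i ∈ Finset.range n, cb i • v i = 0 := by
    rw [← Fin.sum_univ_eq_sum_range (fun i => cb i • v i) n, ← hc]
    exact Finset.sum_congr rfl fun i _ => by simp [hcb, i.isLt]
  intro i
  have := h cb h0 i i.isLt
  simpa [hcb, i.isLt] using this

lemma theta_rel (θ : ℕ → ℕ → MvPolynomial ℕ k)
    (hroot : ∀ n : ℕ, Even n → θ n 0 = theta0 k n)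
    (hcable : ∀ n : ℕ, Even n → ∀ j : ℕ, downOp k (θ n (j + 1)) = θ n j) :
    ∀ j : ℕ, ∀ cb : ℕ → k,
      (∑ i ∈ Finset.range (j / 2 + 1), cb i • θ (2 * i) (j - 2 * i)) = 0 →
      ∀ i < j / 2 + 1, cb i = 0 := by
  intro j
  induction j using Nat.strong_induction_on with
  | _ j IH =>
  match j with
  | 0 =>
    intro cb h i hi
    interval_cases i
    norm_num [Finset.sum_range_one] at h
    rw [hroot 0 Even.zero] at h
    rcases h with h' | h'
    · exact h'
    · exact absurd h' (theta0_ne_zero Even.zero)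
  | (m+1) =>
    intro cb h
    have hD : ∑ i ∈ Finset.range ((m+1)/2+1),
        cb i • downOp k (θ (2*i) (m+1-2*i)) = 0 := by
      have := congrArg (downOp k) h
      simpa only [map_sum, Derivation.map_smul, map_zero] using this
    have hDval : ∀ i ∈ Finset.range ((m+1)/2+1),
        cb i • downOp k (θ (2*i) (m+1-2*i)) =
        cb i • (if 2*i ≤ m then θ (2*i) (m - 2*i) else 0) := by
      intro i hi
      rw [Finset.mem_range] at hi
      by_cases h2 : 2*i ≤ m
      · rw [if_pos h2, show m+1-2*i = (m - 2*i)+1 by omega, hcable _ (even_two_mul i) _]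
      · rw [if_neg h2, show m+1-2*i = 0 by omega, hroot _ (even_two_mul i), downOp_theta0]
    rw [Finset.sum_congr rfl hDval] at hD
    rcases Nat.even_or_odd m with ⟨r, hr⟩ | ⟨r, hr⟩
    · have h1 : (m+1)/2+1 = m/2+1 := by omega
      have h2 : ∀ i ∈ Finset.range (m/2+1),
          cb i • (if 2*i ≤ m then θ (2*i) (m-2*i) else 0) = cb i • θ (2*i) (m-2*i) := by
        intro i hi
        rw [Finset.mem_range] at hi
        rw [if_pos (by omega)]
      rw [h1, Finset.sum_congr rfl h2] at hD
      have hz := IH m (by omega) cb hD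
      intro i hi
      exact hz i (by omega)
    · have h1 : (m+1)/2+1 = (m/2+1)+1 := by omega
      rw [h1, Finset.sum_range_succ,
        if_neg (show ¬ 2*(m/2+1) ≤ m by omega), smul_zero, add_zero] at hD
      have h2 : ∀ i ∈ Finset.range (m/2+1),
          cb i • (if 2*i ≤ m then θ (2*i) (m-2*i) else 0) = cb i • θ (2*i) (m-2*i) := by
        intro i hi
        rw [Finset.mem_range] at hi
        rw [if_pos (by omega)]
      rw [Finset.sum_congr rfl h2] at hD
      have hz := IH m (by omega) cb hD
      rw [h1, Finset.sum_range_succ] at h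
      rw [Finset.sum_eq_zero (fun i hi => by
        rw [Finset.mem_range] at hi
        rw [hz i hi, zero_smul]), zero_add] at h
      rw [show m+1-2*(m/2+1) = 0 by omega, hroot _ (even_two_mul _)] at h
      have htop : cb (m/2+1) = 0 := by
        rcases smul_eq_zero.mp h with h' | h'
        · exact h'
        · exact absurd h' (theta0_ne_zero (even_two_mul _))
      intro i hi
      by_cases hi2 : i < m/2+1
      · exact hz i hi2
      · have : i = m/2+1 := by omega
        rw [this]
        exact htop

end Aux

set_option maxHeartbeats 1600000 in
/-- Given any collection of homogeneous `Δ`-cables `θ̂ₙ` (for even `n`) rooted at `θₙ⁽⁰⁾`,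
for each `j ≥ 0` the set `{θ_{2i}^{(j-2i)} : 0 ≤ i ≤ j/2}` is a basis of `Ω_{(2,j)}`, and
the vertices of all the cables form a basis of `Ω₂`. -/
theorem delta_basis_of_cables (k : Type*) [Field k] [CharZero k]
    (θ : ℕ → ℕ → MvPolynomial ℕ k)
    (hroot : ∀ n : ℕ, Even n → θ n 0 = theta0 k n)
    (hcable : ∀ n : ℕ, Even n → ∀ j : ℕ, downOp k (θ n (j + 1)) = θ n j)
    (hhom : ∀ n : ℕ, Even n → ∀ j : ℕ, θ n j ∈ quadSpace k (n + j)) :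
    (∀ j : ℕ,
      LinearIndependent k (fun i : Fin (j / 2 + 1) => θ (2 * (i : ℕ)) (j - 2 * (i : ℕ))) ∧
      Submodule.span k
          (Set.range (fun i : Fin (j / 2 + 1) => θ (2 * (i : ℕ)) (j - 2 * (i : ℕ)))) =
        quadSpace k j) ∧
    LinearIndependent k (fun p : ℕ × ℕ => θ (2 * p.1) p.2) ∧
    Submodule.span k (Set.range (fun p : ℕ × ℕ => θ (2 * p.1) p.2)) = quadTotal k := by
  classical
  have hmem : ∀ j i : ℕ, 2 * i ≤ j → θ (2 * i) (j - 2 * i) ∈ quadSpace k j := by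
    intro j i hij
    have := hhom (2 * i) (even_two_mul i) (j - 2 * i)
    rwa [show 2 * i + (j - 2 * i) = j by omega] at this
  have hli : ∀ j : ℕ,
      LinearIndependent k (fun i : Fin (j / 2 + 1) => θ (2 * (i : ℕ)) (j - 2 * (i : ℕ))) :=
    fun j => li_of_range (n := j / 2 + 1) (v := fun i => θ (2 * i) (j - 2 * i))
      (theta_rel θ hroot hcable j)
  have hspan : ∀ j : ℕ, Submodule.span k
      (Set.range (fun i : Fin (j / 2 + 1) => θ (2 * (i : ℕ)) (j - 2 * (i : ℕ)))) =
      quadSpace k j := by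
    intro j
    have hle : Submodule.span k
        (Set.range (fun i : Fin (j / 2 + 1) => θ (2 * (i : ℕ)) (j - 2 * (i : ℕ)))) ≤
        quadSpace k j := by
      rw [Submodule.span_le]
      rintro _ ⟨i, rfl⟩
      exact hmem j i (by omega)
    haveI : FiniteDimensional k (quadSpace k j) := by
      rw [← span_mono]
      exact FiniteDimensional.span_of_finite k (Set.finite_range _)
    apply Submodule.eq_of_le_of_finrank_le hle
    rw [finrank_quadSpace, finrank_span_eq_card (hli j)]
    simp
  refine ⟨fun j => ⟨hli j, hspan j⟩, ?_, ?_⟩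
  · rw [linearIndependent_iff']
    intro s g hsum p hp
    set j := 2 * p.1 + p.2 with hj
    have hproj := congrArg (weightedHomogeneousComponent (id : ℕ → ℕ) j) hsum
    rw [map_sum, map_zero] at hproj
    have hterm : ∀ q ∈ s, weightedHomogeneousComponent (id : ℕ → ℕ) j
        (g q • θ (2 * q.1) q.2)
        = if j = 2 * q.1 + q.2 then g q • θ (2 * q.1) q.2 else 0 := by
      intro q _
      rw [LinearMap.map_smul, proj_quad (hhom (2 * q.1) (even_two_mul _) q.2), smul_ite,
        smul_zero]
    rw [Finset.sum_congr rfl hterm, ← Finset.sum_filter] at hproj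
    set cb : ℕ → k := fun i => if (i, j - 2 * i) ∈ s then g (i, j - 2 * i) else 0 with hcb
    have hkey : ∑ i ∈ Finset.range (j / 2 + 1), cb i • θ (2 * i) (j - 2 * i) = 0 := by
      have e1 : ∑ i ∈ Finset.range (j / 2 + 1), cb i • θ (2 * i) (j - 2 * i)
          = ∑ i ∈ (Finset.range (j / 2 + 1)).filter (fun i => (i, j - 2 * i) ∈ s),
              g (i, j - 2 * i) • θ (2 * i) (j - 2 * i) := by
        rw [Finset.sum_filter]
        refine Finset.sum_congr rfl fun i _ => ?_
        simp only [hcb]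
        split_ifs with h
        · rfl
        · rw [zero_smul]
      rw [e1, ← hproj]
      refine Finset.sum_nbij' (fun i => (i, j - 2 * i)) (fun q => q.1) ?_ ?_ ?_ ?_ ?_
      · intro a ha
        simp only [Finset.mem_filter, Finset.mem_range] at ha ⊢
        exact ⟨ha.2, by omega⟩
      · intro q hq
        simp only [Finset.mem_filter, Finset.mem_range] at hq ⊢
        obtain ⟨hq1, hq2⟩ := hq
        have hq3 : (q.1, j - 2 * q.1) = q := Prod.ext rfl (by simp only; omega)
        exact ⟨by omega, by rwa [hq3]⟩
      · intro a ha
        simp only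
      · intro q hq
        simp only [Finset.mem_filter, Finset.mem_range] at hq
        exact Prod.ext rfl (by simp only; omega)
      · intro a ha
        rfl
    have hp1 : p.1 < j / 2 + 1 := by omega
    have := theta_rel θ hroot hcable j cb hkey p.1 hp1
    rw [hcb] at this
    simp only at this
    rw [show (p.1, j - 2 * p.1) = p from Prod.ext rfl (by simp only; omega)] at this
    rwa [if_pos hp] at this
  · apply le_antisymm
    · rw [Submodule.span_le]
      rintro _ ⟨q, rfl⟩
      have h1 : quadSpace k (2 * q.1 + q.2) ≤ quadTotal k := by
        rw [quadSpace, Submodule.span_le]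
        rintro _ ⟨i, hi, rfl⟩
        exact Submodule.subset_span ⟨i, _, rfl⟩
      exact h1 (hhom _ (even_two_mul _) _)
    · rw [quadTotal, Submodule.span_le]
      rintro _ ⟨i, m, rfl⟩
      have h2 : (X i * X m : MvPolynomial ℕ k) ∈ quadSpace k (i + m) :=
        Submodule.subset_span ⟨i, by omega, by rw [show i + m - i = m by omega]⟩
      rw [← hspan (i + m)] at h2
      refine Submodule.span_mono ?_ h2
      rintro _ ⟨q, rfl⟩
      exact ⟨((q : ℕ), (i + m) - 2 * (q : ℕ)), rfl⟩
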